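/- Let p : 2^V → ℤ be skew-supermodular and (H = (V, E), w) a weighted hypergraph such that every hyperedge is contained in some (p, H, w)-tight set, b_{(H,w)}({u}) ≠ 0 for all u ∈ V, b_{(H,w)}(X) ≥ p(X) for all X ⊆ V, and p is symmetric. Let e, f ∈ E be hyperedges whose maximal (p, H, w)-tight sets are distinct. Then e ∩ f = ∅ and e ∪ f ∉ E. -/
import Mathlib

/-- Coverage function of a weighted hypergraph. -/
def coverage {V : Type*} [DecidableEq V] (E : Finset (Finset V)) (w : Finset V → ℕ)
    (X : Finset V) : ℤ :=
  ∑ e ∈ E.filter (fun e => (e ∩ X).Nonempty), (w e : ℤ)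

/-- Skew-supermodularity. -/
def SkewSupermodular {V : Type*} [DecidableEq V] (p : Finset V → ℤ) : Prop :=
  ∀ X Y : Finset V, p X + p Y ≤ p (X ∩ Y) + p (X ∪ Y) ∨
    p X + p Y ≤ p (X \ Y) + p (Y \ X)

lemma coverage_eq {V : Type*} [DecidableEq V] (E : Finset (Finset V)) (w : Finset V → ℕ)
    (X : Finset V) :
    coverage E w X = ∑ g ∈ E, (if (g ∩ X).Nonempty then (w g : ℤ) else 0) := by
  rw [coverage, Finset.sum_filter]

lemma cov_submod {V : Type*} [DecidableEq V] (E : Finset (Finset V)) (w : Finset V → ℕ)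
    (X Y : Finset V) :
    coverage E w (X ∩ Y) + coverage E w (X ∪ Y) ≤ coverage E w X + coverage E w Y := by
  simp only [coverage_eq, ← Finset.sum_add_distrib]
  apply Finset.sum_le_sum
  intro g _
  have h1 : (g ∩ (X ∩ Y)).Nonempty → (g ∩ X).Nonempty := by
    intro h; exact h.mono (by intro x hx; simp at hx ⊢; tauto)
  have h2 : (g ∩ (X ∩ Y)).Nonempty → (g ∩ Y).Nonempty := by
    intro h; exact h.mono (by intro x hx; simp at hx ⊢; tauto)
  have h3 : (g ∩ (X ∪ Y)).Nonempty ↔ (g ∩ X).Nonempty ∨ (g ∩ Y).Nonempty := by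
    rw [Finset.inter_union_distrib_left]
    simp [Finset.Nonempty, Finset.mem_union, exists_or]
  by_cases hX : (g ∩ X).Nonempty <;> by_cases hY : (g ∩ Y).Nonempty <;>
    simp [hX, hY, h3] <;> split_ifs <;> simp_all <;> positivity
  
lemma cov_posimod {V : Type*} [DecidableEq V] (E : Finset (Finset V)) (w : Finset V → ℕ)
    (X Y : Finset V) (g : Finset V) (hg : g ∈ E) :
    (if (g ∩ (X \ Y)).Nonempty then (w g : ℤ) else 0)
      + (if (g ∩ (Y \ X)).Nonempty then (w g : ℤ) else 0)
    ≤ (if (g ∩ X).Nonempty then (w g : ℤ) else 0)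
      + (if (g ∩ Y).Nonempty then (w g : ℤ) else 0) := by
  have h1 : (g ∩ (X \ Y)).Nonempty → (g ∩ X).Nonempty := by
    intro h; exact h.mono (by intro x hx; simp at hx ⊢; tauto)
  have h2 : (g ∩ (Y \ X)).Nonempty → (g ∩ Y).Nonempty := by
    intro h; exact h.mono (by intro x hx; simp at hx ⊢; tauto)
  gcongr ?_ + ?_ <;> split_ifs <;> simp_all <;> positivity

/-- Hyperedges `e`, `f` whose maximal tight sets are distinct are disjoint, and
their union is not a hyperedge. -/
theorem chosen_hyperedges_disjoint_and_union_not_edge {V : Type*} [Fintype V]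
    [DecidableEq V]
    (E : Finset (Finset V)) (w : Finset V → ℕ) (p : Finset V → ℤ)
    (hw : ∀ e ∈ E, 0 < w e)
    (hsym : ∀ X : Finset V, p X = p Xᶜ)
    (hp : SkewSupermodular p)
    (hcover : ∀ Z : Finset V, p Z ≤ coverage E w Z)
    (htight : ∀ e ∈ E, ∃ X : Finset V, e ⊆ X ∧ coverage E w X = p X)
    (hdeg : ∀ u : V, coverage E w {u} ≠ 0)
    (e f : Finset V) (he : e ∈ E) (hf : f ∈ E)
    (hdistinct : ∀ Me Mf : Finset V,
      (e ⊆ Me ∧ coverage E w Me = p Me ∧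
        ∀ M' : Finset V, coverage E w M' = p M' → Me ⊆ M' → Me = M') →
      (f ⊆ Mf ∧ coverage E w Mf = p Mf ∧
        ∀ M' : Finset V, coverage E w M' = p M' → Mf ⊆ M' → Mf = M') →
      Me ≠ Mf) :
    e ∩ f = ∅ ∧ e ∪ f ∉ E := by
  classical
  -- existence of maximal tight supersets
  have exMax : ∀ g ∈ E, ∃ M : Finset V, g ⊆ M ∧ coverage E w M = p M ∧
      ∀ M' : Finset V, coverage E w M' = p M' → M ⊆ M' → M = M' := by
    intro g hg
    obtain ⟨X, hXg, hXt⟩ := htight g hg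
    set S : Finset (Finset V) :=
      Finset.univ.powerset.filter (fun Y => g ⊆ Y ∧ coverage E w Y = p Y) with hS
    have hXS : X ∈ S := by
      simp [hS, Finset.mem_filter, hXg, hXt]
    obtain ⟨M, hMS, hmax⟩ := S.exists_max_image Finset.card ⟨X, hXS⟩
    simp only [hS, Finset.mem_filter] at hMS
    refine ⟨M, hMS.2.1, hMS.2.2, ?_⟩
    intro M' hM't hMM'
    have hM'S : M' ∈ S := by
      simp [hS, Finset.mem_filter, hMS.2.1.trans hMM', hM't]
    exact Finset.eq_of_subset_of_card_le hMM' (hmax M' hM'S)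
  obtain ⟨Me, hMe⟩ := exMax e he
  obtain ⟨Mf, hMf⟩ := exMax f hf
  constructor
  · -- e ∩ f = ∅
    by_contra hne
    obtain ⟨x, hx⟩ := Finset.nonempty_iff_ne_empty.mpr hne
    have hMeMf : Me ≠ Mf := hdistinct Me Mf hMe hMf
    rcases hp Me Mf with hcase | hcase
    · -- union case : Me ∪ Mf tight, contradicting maximality
      have h1 := hcover (Me ∩ Mf)
      have h2 := hcover (Me ∪ Mf)
      have h3 := cov_submod E w Me Mf
      have htu : coverage E w (Me ∪ Mf) = p (Me ∪ Mf) := by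
        rw [hMe.2.1, hMf.2.1] at h3; omega
      have he1 := hMe.2.2 _ htu Finset.subset_union_left
      have he2 := hMf.2.2 _ htu Finset.subset_union_right
      exact hMeMf (he1.trans he2.symm)
    · -- difference case
      have h1 := hcover (Me \ Mf)
      have h2 := hcover (Mf \ Me)
      have h3 : coverage E w Me + coverage E w Mf ≤
          coverage E w (Me \ Mf) + coverage E w (Mf \ Me) := by
        rw [hMe.2.1, hMf.2.1]; omega
      have h4 : coverage E w (Me \ Mf) + coverage E w (Mf \ Me) =
          coverage E w Me + coverage E w Mf := by
        have := Finset.sum_le_sum (fun g hg => cov_posimod E w Me Mf g hg)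
        simp only [Finset.sum_add_distrib] at this
        simp only [coverage_eq] at h3 ⊢
        omega
      -- pointwise equality, specialized at edge e
      simp only [coverage_eq, ← Finset.sum_add_distrib] at h4
      have hpt := (Finset.sum_eq_sum_iff_of_le
        (fun g hg => cov_posimod E w Me Mf g hg)).mp h4 e he
      have hxe : x ∈ e := (Finset.mem_inter.mp hx).1
      have hxf : x ∈ f := (Finset.mem_inter.mp hx).2
      have heMe : (e ∩ Me).Nonempty := ⟨x, Finset.mem_inter.mpr ⟨hxe, hMe.1 hxe⟩⟩
      have heMf : (e ∩ Mf).Nonempty := ⟨x, Finset.mem_inter.mpr ⟨hxe, hMf.1 hxf⟩⟩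
      have heMfMe : ¬ (e ∩ (Mf \ Me)).Nonempty := by
        simp only [Finset.not_nonempty_iff_eq_empty, Finset.eq_empty_iff_forall_notMem]
        intro y hy
        simp only [Finset.mem_inter, Finset.mem_sdiff] at hy
        exact hy.2.2 (hMe.1 hy.1)
      have hwpos : (0:ℤ) < (w e : ℤ) := by exact_mod_cast hw e he
      simp only [heMe, heMf, heMfMe, if_true, if_false] at hpt
      split_ifs at hpt <;> omega
  · -- e ∪ f ∉ E
    intro hef
    obtain ⟨Mg, hMg1, hMg2, hMg3⟩ := exMax (e ∪ f) hef
    exact hdistinct Mg Mg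
      ⟨(Finset.subset_union_left).trans hMg1, hMg2, hMg3⟩
      ⟨(Finset.subset_union_right).trans hMg1, hMg2, hMg3⟩ rfl
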